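/- Livshits' inequality extends to the Hadamard product: for all X, Y ∈ 𝒞, ‖X ⋆ Y‖ ≤ ‖π(XX*)‖^{1/2} · ‖π(Y*Y)‖^{1/2}. -/
import Mathlib

set_option synthInstance.maxHeartbeats 1000000
set_option maxHeartbeats 1000000

open scoped InnerProductSpace
open ContinuousLinearMap

noncomputable section

/-- `l2 G H` is the Hilbert space `ℓ²(G,H)` of square-summable `H`-valued functions on `G`. -/
abbrev l2 (G : Type) (H : Type) [NormedAddCommGroup H] : Type := lp (fun _ : G => H) 2


open scoped ENNReal in
private lemma hadamard_aux_norm_sq {ι : Type*} {E : ι → Type*} [∀ i, NormedAddCommGroup (E i)]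
    (f : lp E 2) : ‖f‖ ^ 2 = ∑' i, ‖f i‖ ^ 2 := by
  have h := lp.norm_rpow_eq_tsum (p := 2) (by norm_num) f
  have h2 : (2 : ℝ≥0∞).toReal = (2 : ℝ) := by norm_num
  rw [h2] at h
  calc ‖f‖ ^ 2 = ‖f‖ ^ (2:ℝ) := by rw [← Real.rpow_natCast]; norm_num
  _ = ∑' i, ‖f i‖ ^ (2:ℝ) := h
  _ = ∑' i, ‖f i‖ ^ 2 := by
      congr 1; funext i; rw [← Real.rpow_natCast]; norm_num

open scoped ENNReal in
private lemma hadamard_aux_summable_sq {ι : Type*} {E : ι → Type*}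
    [∀ i, NormedAddCommGroup (E i)] (f : lp E 2) : Summable fun i => ‖f i‖ ^ 2 := by
  have h := lp.memℓp f
  rw [memℓp_gen_iff (by norm_num : 0 < (2:ℝ≥0∞).toReal)] at h
  have h2 : (2 : ℝ≥0∞).toReal = (2 : ℝ) := by norm_num
  rw [h2] at h
  convert h using 2 with i
  rw [← Real.rpow_natCast]; norm_num

private lemma hadamard_aux_tsum_comm {β γ : Type*} {a : β → γ → ℝ}
    (h0 : ∀ g h, 0 ≤ a g h)
    (h1 : ∀ g, Summable fun h => a g h) (h2 : ∀ h, Summable fun g => a g h)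
    (h3 : Summable fun g => ∑' h, a g h) (h4 : Summable fun h => ∑' g, a g h) :
    ∑' g, ∑' h, a g h = ∑' h, ∑' g, a g h := by
  have key : ENNReal.ofReal (∑' g, ∑' h, a g h) = ENNReal.ofReal (∑' h, ∑' g, a g h) := by
    calc ENNReal.ofReal (∑' g, ∑' h, a g h)
        = ∑' g, ENNReal.ofReal (∑' h, a g h) :=
          ENNReal.ofReal_tsum_of_nonneg (fun g => tsum_nonneg (h0 g)) h3
      _ = ∑' g, ∑' h, ENNReal.ofReal (a g h) := by
          congr 1; funext g; exact ENNReal.ofReal_tsum_of_nonneg (h0 g) (h1 g)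
      _ = ∑' h, ∑' g, ENNReal.ofReal (a g h) := ENNReal.tsum_comm
      _ = ∑' h, ENNReal.ofReal (∑' g, a g h) := by
          congr 1; funext h
          exact (ENNReal.ofReal_tsum_of_nonneg (fun g => h0 g h) (h2 h)).symm
      _ = ENNReal.ofReal (∑' h, ∑' g, a g h) :=
          (ENNReal.ofReal_tsum_of_nonneg (fun h => tsum_nonneg fun g => h0 g h) h4).symm
  have := congrArg ENNReal.toReal key
  rwa [ENNReal.toReal_ofReal (tsum_nonneg fun g => tsum_nonneg (h0 g)),
    ENNReal.toReal_ofReal (tsum_nonneg fun h => tsum_nonneg fun g => h0 g h)] at this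


/-- The Hadamard product `X ⋆ Y := V* ∘ ρ(X) ∘ F ∘ ρ(Y) ∘ V`. -/
def hadamard {H : Type} [NormedAddCommGroup H] [InnerProductSpace ℂ H] [CompleteSpace H]
    {G : Type}
    (ρ : (l2 G H →L[ℂ] l2 G H) → (l2 G (l2 G H) →L[ℂ] l2 G (l2 G H)))
    (V : l2 G H →L[ℂ] l2 G (l2 G H))
    (F : l2 G (l2 G H) →L[ℂ] l2 G (l2 G H))
    (X Y : l2 G H →L[ℂ] l2 G H) : l2 G H →L[ℂ] l2 G H :=
  adjoint V ∘L (ρ X ∘L (F ∘L (ρ Y ∘L V)))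

theorem hadamard_stmt16
    {H : Type} [NormedAddCommGroup H] [InnerProductSpace ℂ H] [CompleteSpace H]
    {G : Type} [Group G] [DecidableEq G]
    (𝒜 : StarSubalgebra ℂ (H →L[ℂ] H))
    (h𝒜 : IsClosed (𝒜 : Set (H →L[ℂ] H)))
    (hnd : Dense (↑(Submodule.span ℂ {v : H | ∃ A ∈ 𝒜, ∃ w : H, v = A w}) : Set H))
    (α : G → (𝒜 ≃⋆ₐ[ℂ] 𝒜))
    (hα1 : ∀ A, α 1 A = A)
    (hαmul : ∀ g h A, α (g * h) A = α g (α h A))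
    (Ψ : 𝒜 → (l2 G H →L[ℂ] l2 G H))
    (hΨ : ∀ (A : 𝒜) (ξ : l2 G H) (g : G),
      (Ψ A ξ : ∀ _ : G, H) g = ((α g⁻¹ A : 𝒜) : H →L[ℂ] H) ((ξ : ∀ _ : G, H) g))
    (L : G → (l2 G H →L[ℂ] l2 G H))
    (hL : ∀ (g : G) (ξ : l2 G H) (h : G),
      (L g ξ : ∀ _ : G, H) h = (ξ : ∀ _ : G, H) (g⁻¹ * h))
    (𝒞 : Set (l2 G H →L[ℂ] l2 G H))
    (h𝒞 : 𝒞 = ((StarAlgebra.adjoin ℂ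
        (Set.range Ψ ∪ Set.range L)).topologicalClosure : Set _))
    (π : (l2 G H →L[ℂ] l2 G H) → (l2 G H →L[ℂ] l2 G H))
    (hπ : ∀ (X : l2 G H →L[ℂ] l2 G H) (ξ η : l2 G H), ⟪π X ξ, η⟫_ℂ =
      ∑' g : G, ⟪X (lp.single 2 g ((ξ : ∀ _ : G, H) g)),
        lp.single 2 g ((η : ∀ _ : G, H) g)⟫_ℂ)
    (ρ : (l2 G H →L[ℂ] l2 G H) → (l2 G (l2 G H) →L[ℂ] l2 G (l2 G H)))
    (hρ : ∀ (X : l2 G H →L[ℂ] l2 G H) (Ξ : l2 G (l2 G H)) (g : G),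
      (ρ X Ξ : ∀ _ : G, l2 G H) g = X ((Ξ : ∀ _ : G, l2 G H) g))
    (V : l2 G H →L[ℂ] l2 G (l2 G H))
    (hV : ∀ (ξ : l2 G H) (g : G),
      (V ξ : ∀ _ : G, l2 G H) g = lp.single 2 g ((ξ : ∀ _ : G, H) g))
    (F : l2 G (l2 G H) →L[ℂ] l2 G (l2 G H))
    (hF : ∀ (Ξ : l2 G (l2 G H)) (g h : G),
      ((F Ξ : ∀ _ : G, l2 G H) g : ∀ _ : G, H) h
        = ((Ξ : ∀ _ : G, l2 G H) h : ∀ _ : G, H) g)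
    :
    ∀ X ∈ 𝒞, ∀ Y ∈ 𝒞,
      ‖hadamard ρ V F X Y‖
        ≤ Real.sqrt ‖π (X * star X)‖ * Real.sqrt ‖π (star Y * Y)‖ := by

  intro X _hX Y _hY
  -- None of the crossed-product structure is needed: the inequality holds for all operators.
  clear h𝒜 hnd hα1 hαmul hΨ hL h𝒞
  -- Key estimate: ‖ρ Z (V ξ)‖ ^ 2 ≤ ‖π (star Z * Z)‖ * ‖ξ‖ ^ 2.
  have hD : ∀ (Z : l2 G H →L[ℂ] l2 G H) (ξ : l2 G H),
      ‖ρ Z (V ξ)‖ ^ 2 ≤ ‖π (star Z * Z)‖ * ‖ξ‖ ^ 2 := by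
    intro Z ξ
    have h1 : ‖ρ Z (V ξ)‖ ^ 2 = ∑' g : G, ‖Z (lp.single 2 g ((ξ : ∀ _ : G, H) g))‖ ^ 2 := by
      rw [hadamard_aux_norm_sq]
      congr 1; funext g; rw [hρ, hV]
    have hsum : Summable fun g : G => ‖Z (lp.single 2 g ((ξ : ∀ _ : G, H) g))‖ ^ 2 := by
      have h := hadamard_aux_summable_sq (ρ Z (V ξ))
      convert h using 2 with g
      rw [hρ, hV]
    have h2 : ⟪π (star Z * Z) ξ, ξ⟫_ℂ
        = ((∑' g : G, ‖Z (lp.single 2 g ((ξ : ∀ _ : G, H) g))‖ ^ 2 : ℝ) : ℂ) := by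
      rw [hπ, Complex.ofReal_tsum]
      refine tsum_congr fun g => ?_
      rw [ContinuousLinearMap.mul_apply, ContinuousLinearMap.star_eq_adjoint,
        ContinuousLinearMap.adjoint_inner_left, inner_self_eq_norm_sq_to_K,
        Complex.ofReal_pow]
      norm_cast
    have h3 : ‖ρ Z (V ξ)‖ ^ 2 = (⟪π (star Z * Z) ξ, ξ⟫_ℂ).re := by
      rw [h2, h1, Complex.ofReal_re]
    calc ‖ρ Z (V ξ)‖ ^ 2 = (⟪π (star Z * Z) ξ, ξ⟫_ℂ).re := h3
      _ ≤ ‖⟪π (star Z * Z) ξ, ξ⟫_ℂ‖ := Complex.re_le_norm _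
      _ ≤ ‖π (star Z * Z) ξ‖ * ‖ξ‖ := norm_inner_le_norm _ _
      _ ≤ (‖π (star Z * Z)‖ * ‖ξ‖) * ‖ξ‖ :=
          mul_le_mul_of_nonneg_right ((π (star Z * Z)).le_opNorm ξ) (norm_nonneg ξ)
      _ = ‖π (star Z * Z)‖ * ‖ξ‖ ^ 2 := by ring
  have hD' : ∀ (Z : l2 G H →L[ℂ] l2 G H) (ξ : l2 G H),
      ‖ρ Z (V ξ)‖ ≤ Real.sqrt ‖π (star Z * Z)‖ * ‖ξ‖ := by
    intro Z ξ
    have := hD Z ξ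
    have h := Real.sqrt_le_sqrt this
    rwa [Real.sqrt_sq (norm_nonneg _), Real.sqrt_mul (norm_nonneg _),
      Real.sqrt_sq (norm_nonneg _)] at h
  -- F is isometric on elements.
  have hFnorm : ∀ Θ : l2 G (l2 G H), ‖F Θ‖ = ‖Θ‖ := by
    intro Θ
    have hsq : ‖F Θ‖ ^ 2 = ‖Θ‖ ^ 2 := by
      have e1 : ‖F Θ‖ ^ 2
          = ∑' g : G, ∑' h : G, ‖((Θ : ∀ _ : G, l2 G H) h : ∀ _ : G, H) g‖ ^ 2 := by
        rw [hadamard_aux_norm_sq]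
        congr 1; funext g
        rw [hadamard_aux_norm_sq]
        congr 1; funext h
        rw [hF]
      have e2 : ‖Θ‖ ^ 2
          = ∑' h : G, ∑' g : G, ‖((Θ : ∀ _ : G, l2 G H) h : ∀ _ : G, H) g‖ ^ 2 := by
        rw [hadamard_aux_norm_sq]
        congr 1; funext h
        rw [hadamard_aux_norm_sq]
      rw [e1, e2]
      refine hadamard_aux_tsum_comm (fun g h => by positivity) ?_ ?_ ?_ ?_
      · intro g
        have h := hadamard_aux_summable_sq ((F Θ : ∀ _ : G, l2 G H) g)
        convert h using 2 with h'
        rw [hF]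
      · intro h
        exact hadamard_aux_summable_sq ((Θ : ∀ _ : G, l2 G H) h)
      · have h := hadamard_aux_summable_sq (F Θ)
        convert h using 2 with g
        rw [hadamard_aux_norm_sq]
        congr 1; funext h'
        rw [hF]
      · have h := hadamard_aux_summable_sq Θ
        convert h using 2 with h'
        rw [hadamard_aux_norm_sq]
    have := congrArg Real.sqrt hsq
    rwa [Real.sqrt_sq (norm_nonneg _), Real.sqrt_sq (norm_nonneg _)] at this
  -- ρ intertwines adjoints.
  have hCadj : ∀ (Z : l2 G H →L[ℂ] l2 G H) (Θ Ξ : l2 G (l2 G H)),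
      ⟪ρ Z Θ, Ξ⟫_ℂ = ⟪Θ, ρ (ContinuousLinearMap.adjoint Z) Ξ⟫_ℂ := by
    intro Z Θ Ξ
    rw [lp.inner_eq_tsum, lp.inner_eq_tsum]
    congr 1; funext g
    rw [hρ, hρ, ContinuousLinearMap.adjoint_inner_right]
  set a := ‖π (X * star X)‖ with ha
  set b := ‖π (star Y * Y)‖ with hb
  have hXside : ∀ η : l2 G H,
      ‖ρ (ContinuousLinearMap.adjoint X) (V η)‖ ≤ Real.sqrt a * ‖η‖ := by
    intro η
    have h := hD' (ContinuousLinearMap.adjoint X) η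
    have e : star (ContinuousLinearMap.adjoint X) * ContinuousLinearMap.adjoint X
        = X * star X := by
      rw [ContinuousLinearMap.star_eq_adjoint, ContinuousLinearMap.adjoint_adjoint,
        ContinuousLinearMap.star_eq_adjoint]
    rwa [e] at h
  have hYside : ∀ ξ : l2 G H, ‖ρ Y (V ξ)‖ ≤ Real.sqrt b * ‖ξ‖ := hD' Y
  have hCnn : 0 ≤ Real.sqrt a * Real.sqrt b := by positivity
  refine ContinuousLinearMap.opNorm_le_bound _ hCnn ?_
  intro ξ
  have hip : ∀ η : l2 G H, ‖⟪hadamard ρ V F X Y ξ, η⟫_ℂ‖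
      ≤ (Real.sqrt a * Real.sqrt b) * ‖ξ‖ * ‖η‖ := by
    intro η
    have key : ⟪hadamard ρ V F X Y ξ, η⟫_ℂ
        = ⟪F (ρ Y (V ξ)), ρ (ContinuousLinearMap.adjoint X) (V η)⟫_ℂ := by
      show ⟪ContinuousLinearMap.adjoint V (ρ X (F (ρ Y (V ξ)))), η⟫_ℂ = _
      rw [ContinuousLinearMap.adjoint_inner_left]
      exact hCadj X _ _
    rw [key]
    calc ‖⟪F (ρ Y (V ξ)), ρ (ContinuousLinearMap.adjoint X) (V η)⟫_ℂ‖
        ≤ ‖F (ρ Y (V ξ))‖ * ‖ρ (ContinuousLinearMap.adjoint X) (V η)‖ :=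
          norm_inner_le_norm _ _
      _ = ‖ρ Y (V ξ)‖ * ‖ρ (ContinuousLinearMap.adjoint X) (V η)‖ := by rw [hFnorm]
      _ ≤ (Real.sqrt b * ‖ξ‖) * (Real.sqrt a * ‖η‖) :=
          mul_le_mul (hYside ξ) (hXside η) (norm_nonneg _) (by positivity)
      _ = (Real.sqrt a * Real.sqrt b) * ‖ξ‖ * ‖η‖ := by ring
  by_cases hz : hadamard ρ V F X Y ξ = 0
  · rw [hz, norm_zero]
    positivity
  · have hpos : 0 < ‖hadamard ρ V F X Y ξ‖ := norm_pos_iff.mpr hz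
    have h1 : ‖hadamard ρ V F X Y ξ‖ * ‖hadamard ρ V F X Y ξ‖
        ≤ ((Real.sqrt a * Real.sqrt b) * ‖ξ‖) * ‖hadamard ρ V F X Y ξ‖ := by
      have h2 : ‖hadamard ρ V F X Y ξ‖ * ‖hadamard ρ V F X Y ξ‖
          = (⟪hadamard ρ V F X Y ξ, hadamard ρ V F X Y ξ⟫_ℂ).re := by
        rw [← RCLike.re_to_complex, inner_self_eq_norm_mul_norm]
      rw [h2]
      calc (⟪hadamard ρ V F X Y ξ, hadamard ρ V F X Y ξ⟫_ℂ).re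
          ≤ ‖⟪hadamard ρ V F X Y ξ, hadamard ρ V F X Y ξ⟫_ℂ‖ := Complex.re_le_norm _
        _ ≤ (Real.sqrt a * Real.sqrt b) * ‖ξ‖ * ‖hadamard ρ V F X Y ξ‖ :=
            hip (hadamard ρ V F X Y ξ)
    exact le_of_mul_le_mul_right h1 hpos
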